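/- For all integers b ≥ 2 and m ≥ 2, lim_{N→∞} (1/N) Σ_{n=0}^{N−1} exp(2πi s_b(n)/m) = 0, where s_b(n) is the base-b digit sum of n. -/

import Mathlib

open Filter Finset

private lemma digsum' {b : ℕ} (hb : 2 ≤ b) (q d : ℕ) (hd : d < b) :
    (Nat.digits b (b * q + d)).sum = d + (Nat.digits b q).sum := by
  rcases Nat.eq_zero_or_pos (b * q + d) with h | h
  · have hq : q = 0 ∧ d = 0 := by constructor <;> nlinarith
    simp [hq.1, hq.2]
  · rw [Nat.digits_def' (by omega : 1 < b) h]
    have h1 : (b * q + d) % b = d := by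
      rw [Nat.mul_add_mod, Nat.mod_eq_of_lt hd]
    have h2 : (b * q + d) / b = q := by
      rw [Nat.mul_add_div (by omega), Nat.div_eq_of_lt hd, Nat.add_zero]
    rw [h1, h2, List.sum_cons]

private lemma norm_one_add_lt' (ω : ℂ) (hn : ‖ω‖ = 1) (h1 : ω ≠ 1) : ‖1 + ω‖ < 2 := by
  have hsq : ω.re ^ 2 + ω.im ^ 2 = 1 := by
    have : Complex.normSq ω = 1 := by rw [← Complex.sq_norm, hn]; norm_num
    rw [Complex.normSq_apply] at this; nlinarith
  have hre : ω.re < 1 := by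
    rcases lt_or_eq_of_le (Complex.re_le_norm ω) with h | h
    · rwa [hn] at h
    · exfalso
      apply h1
      have him : ω.im = 0 := by nlinarith [h, hn]
      apply Complex.ext <;> simp [him, h, hn]
  have h2 : ‖1 + ω‖ ^ 2 < 4 := by
    rw [Complex.sq_norm, Complex.normSq_apply]
    simp only [Complex.add_re, Complex.add_im, Complex.one_re, Complex.one_im]
    nlinarith [hsq, hre]
  nlinarith [norm_nonneg (1 + ω), h2]

open Filter in
theorem stmt11 (b m : ℕ) (hb : 2 ≤ b) (hm : 2 ≤ m) :
    Tendsto (fun N : ℕ => (1 / N : ℂ) * ∑ n ∈ Finset.range N,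
        Complex.exp (2 * Real.pi * Complex.I * ((Nat.digits b n).sum : ℂ) / m))
      atTop (nhds 0) := by
  set ω : ℂ := Complex.exp (2 * Real.pi * Complex.I / m) with hωdef
  set s : ℕ → ℕ := fun n => (Nat.digits b n).sum with hsdef
  set S : ℕ → ℂ := fun N => ∑ n ∈ Finset.range N, ω ^ s n with hSdef
  set c : ℂ := ∑ d ∈ Finset.range b, ω ^ d with hcdef
  have hnω : ‖ω‖ = 1 := by
    have h : (2 * Real.pi * Complex.I / m) = ((2 * Real.pi / m : ℝ) : ℂ) * Complex.I := by
      push_cast; ring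
    rw [hωdef, h, Complex.norm_exp_ofReal_mul_I]
  have hω1 : ω ≠ 1 := by
    rw [hωdef, Ne, Complex.exp_eq_one_iff]
    rintro ⟨n, hn⟩
    have hm0 : (m : ℂ) ≠ 0 := Nat.cast_ne_zero.2 (by omega)
    have hπ : (Real.pi : ℂ) ≠ 0 := by exact_mod_cast Real.pi_ne_zero
    have h2πI : (2 * (Real.pi : ℂ) * Complex.I) ≠ 0 := by
      simp [hπ, Complex.I_ne_zero]
    have h1 : (1 : ℂ) = n * m := by
      field_simp at hn
      apply mul_left_cancel₀ h2πI
      linear_combination (2 * (Real.pi : ℂ) * Complex.I) * hn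
    have h2 : (1 : ℤ) = n * m := by exact_mod_cast h1
    have hdvd : (m : ℤ) ∣ 1 := ⟨n, by linarith [h2]⟩
    have := Int.le_of_dvd one_pos hdvd
    omega
  have hnc : ‖c‖ < b := by
    have h12 := norm_one_add_lt' ω hnω hω1
    have hsplit : c = (1 + ω) + ∑ d ∈ Finset.Ico 2 b, ω ^ d := by
      rw [hcdef, Finset.range_eq_Ico, ← Finset.sum_Ico_consecutive _ (by omega : 0 ≤ 2) hb]
      congr 1
      rw [← Finset.range_eq_Ico]
      simp [Finset.sum_range_succ]
    rw [hsplit]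
    calc ‖(1 + ω) + ∑ d ∈ Finset.Ico 2 b, ω ^ d‖
        ≤ ‖1 + ω‖ + ‖∑ d ∈ Finset.Ico 2 b, ω ^ d‖ := norm_add_le _ _
      _ ≤ ‖1 + ω‖ + ∑ d ∈ Finset.Ico 2 b, ‖ω ^ d‖ := by
          gcongr; exact norm_sum_le _ _
      _ = ‖1 + ω‖ + (b - 2 : ℕ) := by
          simp [norm_pow, hnω, Nat.card_Ico]
      _ < 2 + (b - 2 : ℕ) := by gcongr
      _ = b := by
          push_cast [Nat.cast_sub hb]
          ring
  -- basic recursions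
  have hSsucc : ∀ n, S (n + 1) = S n + ω ^ s n := fun n => Finset.sum_range_succ _ _
  have hpart : ∀ q, ∀ r ≤ b,
      S (b * q + r) = S (b * q) + ω ^ s q * ∑ d ∈ Finset.range r, ω ^ d := by
    intro q r hr
    induction r with
    | zero => simp
    | succ r ih =>
      rw [show b * q + (r + 1) = (b * q + r) + 1 by ring, hSsucc, ih (by omega)]
      have hs' : s (b * q + r) = r + s q := digsum' hb q r (by omega)
      rw [hs', Finset.sum_range_succ, pow_add]
      ring
  have hfull : ∀ q, S (b * q) = c * S q := by
    intro q
    induction q with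
    | zero => simp [hSdef]
    | succ q ih =>
      rw [show b * (q + 1) = b * q + b by ring, hpart q b le_rfl, ih, hSsucc, ← hcdef]
      ring
  -- the norm bound
  set M : ℝ := max 1 ‖c‖ with hMdef
  have hM1 : (1 : ℝ) ≤ M := le_max_left _ _
  have hcM : ‖c‖ ≤ M := le_max_right _ _
  have hMb : M < b := by
    apply max_lt _ hnc
    exact_mod_cast (by omega : 1 < b)
  have hgeo : ∀ r : ℕ, r ≤ b → ‖∑ d ∈ Finset.range r, ω ^ d‖ ≤ b := by
    intro r hr
    calc ‖∑ d ∈ Finset.range r, ω ^ d‖ ≤ ∑ d ∈ Finset.range r, ‖ω ^ d‖ := norm_sum_le _ _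
      _ = r := by simp [norm_pow, hnω]
      _ ≤ b := by exact_mod_cast hr
  have hbound : ∀ N : ℕ, ‖S N‖ ≤ b * (Nat.log b N + 1) * M ^ Nat.log b N := by
    intro N
    induction N using Nat.strong_induction_on with
    | _ N ih =>
    rcases Nat.lt_or_ge N b with hNb | hNb
    · have hlog : Nat.log b N = 0 := Nat.log_of_lt hNb
      have hS0 : S 0 = 0 := Finset.sum_range_zero _
      have h := hpart 0 N hNb.le
      rw [mul_zero, zero_add, hS0, zero_add] at h
      have hSN : S N = ω ^ s 0 * ∑ d ∈ Finset.range N, ω ^ d := h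
      rw [hlog, hSN]
      calc ‖ω ^ s 0 * ∑ d ∈ Finset.range N, ω ^ d‖
          = ‖∑ d ∈ Finset.range N, ω ^ d‖ := by
            rw [norm_mul, norm_pow, hnω]; simp
        _ ≤ b := hgeo N hNb.le
        _ ≤ b * ((0 : ℕ) + 1) * M ^ 0 := by simp
    · set q := N / b with hq
      set r := N % b with hr
      have hN0 : 0 < N := by omega
      have hqN : q < N := Nat.div_lt_self hN0 (by omega)
      have hNqr : N = b * q + r := (Nat.div_add_mod N b).symm
      have hrb : r < b := Nat.mod_lt _ (by omega)
      have hSN : S N = c * S q + ω ^ s q * ∑ d ∈ Finset.range r, ω ^ d := by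
        conv_lhs => rw [hNqr]
        rw [hpart q r hrb.le, hfull]
      have hlogq : Nat.log b q = Nat.log b N - 1 := by
        rw [hq]; exact Nat.log_div_base b N
      have hlogpos : 0 < Nat.log b N := Nat.log_pos (by omega) hNb
      have hlog : Nat.log b N = Nat.log b q + 1 := by omega
      have ihq := ih q hqN
      set L := Nat.log b q with hL
      have hMpow : (1 : ℝ) ≤ M ^ (L + 1) := one_le_pow₀ hM1
      have hb0 : (0 : ℝ) < b := by positivity
      calc ‖S N‖ = ‖c * S q + ω ^ s q * ∑ d ∈ Finset.range r, ω ^ d‖ := by rw [hSN]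
        _ ≤ ‖c‖ * ‖S q‖ + ‖ω ^ s q‖ * ‖∑ d ∈ Finset.range r, ω ^ d‖ := by
            refine (norm_add_le _ _).trans ?_
            rw [norm_mul, norm_mul]
        _ ≤ M * (b * (L + 1) * M ^ L) + 1 * b := by
            have h1 : ‖c‖ * ‖S q‖ ≤ M * (b * (L + 1) * M ^ L) := by
              apply mul_le_mul hcM ihq (norm_nonneg _) (le_trans zero_le_one hM1)
            have h2 : ‖ω ^ s q‖ * ‖∑ d ∈ Finset.range r, ω ^ d‖ ≤ 1 * b := by
              rw [norm_pow, hnω, one_pow, one_mul, one_mul]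
              exact hgeo r hrb.le
            exact add_le_add h1 h2
        _ ≤ b * ((L + 1 : ℕ) + 1) * M ^ (L + 1) := by
            have h1 : M * (b * (L + 1) * M ^ L) = b * (L + 1) * M ^ (L + 1) := by
              rw [pow_succ]; ring
            rw [h1, one_mul]
            push_cast
            nlinarith [hMpow, hb0, pow_nonneg (le_trans zero_le_one hM1) L]
        _ = b * (Nat.log b N + 1) * M ^ Nat.log b N := by rw [hlog]
  -- the limit
  have ht0 : (0 : ℝ) ≤ M / b := by positivity
  have ht1 : M / b < 1 := (div_lt_one (by positivity)).2 hMb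
  have hlogtop : Tendsto (fun N : ℕ => Nat.log b N) atTop atTop := by
    apply tendsto_atTop_atTop.2
    intro K
    refine ⟨b ^ K, fun N hN => ?_⟩
    have hN0 : N ≠ 0 := by
      have : 0 < b ^ K := Nat.pow_pos (by omega : 0 < b)
      omega
    exact (Nat.le_log_iff_pow_le (by omega) hN0).2 hN
  have haux : Tendsto (fun L : ℕ => (b : ℝ) * (L + 1) * (M / b) ^ L) atTop (nhds 0) := by
    have h1 := tendsto_self_mul_const_pow_of_lt_one ht0 ht1
    have h2 := tendsto_pow_atTop_nhds_zero_of_lt_one ht0 ht1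
    have h3 := ((h1.add h2).const_mul (b : ℝ))
    simp only [mul_zero, add_zero] at h3
    convert h3 using 2 with L
    ring
  apply squeeze_zero_norm' (a := fun N : ℕ => (b : ℝ) * (Nat.log b N + 1) * (M / b) ^ Nat.log b N)
  · filter_upwards [eventually_ge_atTop 1] with N hN1
    have hN0 : (0 : ℝ) < N := by exact_mod_cast hN1
    set L := Nat.log b N with hL
    have hpow : (b : ℝ) ^ L ≤ N := by exact_mod_cast Nat.pow_log_le_self b (by omega)
    have hbL : (0 : ℝ) < (b : ℝ) ^ L := by positivity
    have hnorm : ‖(1 / N : ℂ) * ∑ n ∈ Finset.range N,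
        Complex.exp (2 * Real.pi * Complex.I * ((Nat.digits b n).sum : ℂ) / m)‖
        = ‖S N‖ / N := by
      have hsum : ∑ n ∈ Finset.range N,
          Complex.exp (2 * Real.pi * Complex.I * ((Nat.digits b n).sum : ℂ) / m) = S N := by
        apply Finset.sum_congr rfl
        intro n _
        rw [show (2 * Real.pi * Complex.I * ((Nat.digits b n).sum : ℂ) / m)
            = ((Nat.digits b n).sum : ℕ) * (2 * Real.pi * Complex.I / m) by push_cast; ring,
          Complex.exp_nat_mul]
      rw [hsum, norm_mul, norm_div, norm_one]
      simp [div_eq_inv_mul]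
    rw [hnorm]
    calc ‖S N‖ / N ≤ (b * (L + 1) * M ^ L) / N := by
          gcongr
          exact hbound N
      _ ≤ (b * (L + 1) * M ^ L) / (b : ℝ) ^ L := by
          apply div_le_div_of_nonneg_left _ hbL hpow
          positivity
      _ = b * (L + 1) * (M / b) ^ L := by
          rw [div_pow]
          field_simp
  · exact haux.comp hlogtop
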